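/- With g, h, k₁, k₂ and f as defined, one has the identity of polynomials in ℤ[z,w]: Res_y( Res_x( g(x,y), h(x,z) ), h(y,w) ) = − k₁(z,w) · k₂(z,w) · f(z,w), where the inner resultant is taken with respect to x (g having degree 3 and h(x,z) degree 1 in x) and the outer resultant with respect to y (h(y,w) having degree 1 in y). -/

import Mathlib

set_option maxHeartbeats 1000000
set_option maxSynthPendingDepth 5


open Polynomial

/-- The Sylvester matrix of two polynomials `p`, `q` (with respect to their
natural degrees): the first `q.natDegree` rows contain the coefficients of `p`
in descending order, the remaining `p.natDegree` rows those of `q`. -/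
noncomputable def sylvester {R : Type*} [CommRing R] (p q : R[X]) :
    Matrix (Fin (p.natDegree + q.natDegree)) (Fin (p.natDegree + q.natDegree)) R :=
  Matrix.of fun i j =>
    if (i : ℕ) < q.natDegree then
      (if (i : ℕ) ≤ (j : ℕ) ∧ (j : ℕ) ≤ p.natDegree + (i : ℕ) then
        p.coeff (p.natDegree + (i : ℕ) - (j : ℕ)) else 0)
    else
      (if (i : ℕ) - q.natDegree ≤ (j : ℕ) ∧ (j : ℕ) ≤ q.natDegree + ((i : ℕ) - q.natDegree) then
        q.coeff (q.natDegree + ((i : ℕ) - q.natDegree) - (j : ℕ)) else 0)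

/-- The resultant of two polynomials, i.e. the determinant of their Sylvester matrix. -/
noncomputable def resultant {R : Type*} [CommRing R] (p q : R[X]) : R :=
  (_root_.sylvester p q).det

lemma res31 {R : Type*} [CommRing R] (p q : R[X]) (hp : p.natDegree = 3) (hq : q.natDegree = 1) :
    _root_.resultant p q = p.coeff 3 * q.coeff 0 ^ 3 - p.coeff 2 * q.coeff 0 ^ 2 * q.coeff 1
      + p.coeff 1 * q.coeff 0 * q.coeff 1 ^ 2 - p.coeff 0 * q.coeff 1 ^ 3 := by
  have h4 : p.natDegree + q.natDegree = 4 := by omega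
  rw [_root_.resultant, ← Matrix.det_reindex_self (finCongr h4) (_root_.sylvester p q)]
  have hM : (Matrix.reindex (finCongr h4) (finCongr h4) (_root_.sylvester p q)) =
    !![p.coeff 3, p.coeff 2, p.coeff 1, p.coeff 0;
       q.coeff 1, q.coeff 0, 0, 0;
       0, q.coeff 1, q.coeff 0, 0;
       0, 0, q.coeff 1, q.coeff 0] := by
    ext i j
    fin_cases i <;> fin_cases j <;>
      norm_num [_root_.sylvester, hp, hq, Matrix.reindex_apply, finCongr, Fin.lt_def]
  rw [hM, Matrix.det_succ_row_zero]
  simp [Fin.sum_univ_succ, Matrix.det_fin_three, Fin.succAbove]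
  ring

lemma natDegree_cubic' {R : Type*} [CommRing R] {a b c d : R} (ha : a ≠ 0) :
    (C a * X ^ 3 + C b * X ^ 2 + C c * X + C d).natDegree = 3 := by
  compute_degree!

lemma coeff_cubic' {R : Type*} [CommRing R] (a b c d : R) :
    (C a * X ^ 3 + C b * X ^ 2 + C c * X + C d).coeff 3 = a ∧
    (C a * X ^ 3 + C b * X ^ 2 + C c * X + C d).coeff 2 = b ∧
    (C a * X ^ 3 + C b * X ^ 2 + C c * X + C d).coeff 1 = c ∧
    (C a * X ^ 3 + C b * X ^ 2 + C c * X + C d).coeff 0 = d := by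
  refine ⟨?_, ?_, ?_, ?_⟩ <;>
    simp [coeff_add, coeff_C_mul, coeff_X_pow, coeff_C, coeff_X]

lemma natDegree_linear' {R : Type*} [CommRing R] {a b : R} (ha : a ≠ 0) :
    (C a * X + C b).natDegree = 1 := by
  compute_degree!

lemma coeff_linear' {R : Type*} [CommRing R] (a b : R) :
    (C a * X + C b).coeff 1 = a ∧ (C a * X + C b).coeff 0 = b := by
  constructor <;> simp [coeff_add, coeff_C_mul, coeff_C, coeff_X]

lemma XsubX2_ne {R : Type*} [CommRing R] [Nontrivial R] : (X : R[X]) - X ^ 2 ≠ 0 := by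
  intro h
  have := congrArg (fun p => Polynomial.coeff p 2) h
  simp [coeff_X, coeff_X_pow] at this

/-- `f(z,w) = w³ + (−z³+6z²−6z−1)w² + (z³−3z²+3z+1)w − z³`. -/
def fpoly {R : Type*} [CommRing R] (z w : R) : R :=
  w ^ 3 + (-z ^ 3 + 6 * z ^ 2 - 6 * z - 1) * w ^ 2 + (z ^ 3 - 3 * z ^ 2 + 3 * z + 1) * w - z ^ 3

/-- `g(x,y) = (y²+3y+9)x³ − (y+6)³`. -/
def gpoly {R : Type*} [CommRing R] (x y : R) : R :=
  (y ^ 2 + 3 * y + 9) * x ^ 3 - (y + 6) ^ 3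

/-- `h(x,z) = z³ − (3+x)z² + zx + 1`. -/
def hpoly {R : Type*} [CommRing R] (x z : R) : R :=
  z ^ 3 - (3 + x) * z ^ 2 + z * x + 1

/-- `k₁(z,w)`. -/
def k1poly {R : Type*} [CommRing R] (z w : R) : R :=
  w ^ 3 * z ^ 3 - 2 * w ^ 2 * z ^ 3 - 3 * w ^ 2 * z ^ 2 + 2 * w * z ^ 3 + 3 * w ^ 2 * z - z ^ 3
    + w ^ 2 + 3 * z ^ 2 - w - 3 * z + 1

/-- `k₂(z,w)`. -/
def k2poly {R : Type*} [CommRing R] (z w : R) : R :=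
  w ^ 3 * z ^ 3 - 3 * w ^ 3 * z ^ 2 - w ^ 2 * z ^ 3 + 3 * w ^ 3 * z + 9 * w ^ 2 * z ^ 2
    + w * z ^ 3 - w ^ 3 - 9 * w ^ 2 * z - 6 * w * z ^ 2 + 2 * w ^ 2 + 6 * w * z - 2 * w + 1

/- We work in `C = ℤ[z][w]` (with `z = C X` the inner variable and `w = X` the outer one),
`S = C[y]` and `T = S[x]`.  The inner resultant `Res_x(g(x,y), h(x,z))` is computed in `T`
and lands in `S`; the outer resultant `Res_y(·, h(y,w))` is computed in `S` and lands in `C`. -/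
theorem statement0 :
    _root_.resultant
      (_root_.resultant
        (gpoly (Polynomial.X : Polynomial (Polynomial (Polynomial (Polynomial ℤ))))
          (Polynomial.C Polynomial.X))
        (hpoly Polynomial.X (Polynomial.C (Polynomial.C (Polynomial.C Polynomial.X)))))
      (hpoly Polynomial.X (Polynomial.C Polynomial.X)) =
    -(k1poly (Polynomial.C (Polynomial.X : Polynomial ℤ)) Polynomial.X
        * k2poly (Polynomial.C (Polynomial.X : Polynomial ℤ)) Polynomial.X
        * fpoly (Polynomial.C (Polynomial.X : Polynomial ℤ)) Polynomial.X) := by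
  -- ring levels
  -- C0 := Polynomial ℤ, C1 := Polynomial C0 (= final ring), S := Polynomial C1, T := Polynomial S
  have hg : gpoly (Polynomial.X : Polynomial (Polynomial (Polynomial (Polynomial ℤ))))
        (Polynomial.C Polynomial.X)
      = C (X ^ 2 + 3 * X + 9) * X ^ 3 + C 0 * X ^ 2 + C 0 * X + C (-(X + 6) ^ 3) := by
    simp only [gpoly, map_add, map_mul, map_pow, map_neg, map_ofNat, map_one, C_0]
    ring
  have hq1 : hpoly (Polynomial.X : Polynomial (Polynomial (Polynomial (Polynomial ℤ))))
        (Polynomial.C (Polynomial.C (Polynomial.C Polynomial.X)))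
      = C (C (C (X - X ^ 2))) * X + C (C (C (X ^ 3 - 3 * X ^ 2 + 1))) := by
    simp only [hpoly, map_add, map_mul, map_pow, map_sub, map_ofNat, map_one]
    ring
  have hag : ((X : Polynomial (Polynomial (Polynomial ℤ))) ^ 2 + 3 * X + 9) ≠ 0 := by
    intro h
    have := congrArg (fun p => Polynomial.coeff p 2) h
    simp [coeff_X, coeff_X_pow] at this
  have haq : (C (C ((X : Polynomial ℤ) - X ^ 2)) :
      Polynomial (Polynomial (Polynomial ℤ))) ≠ 0 :=
    C_ne_zero.mpr (C_ne_zero.mpr XsubX2_ne)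
  have hdeg1 := natDegree_cubic' (b := (0 : Polynomial (Polynomial (Polynomial ℤ))))
    (c := 0) (d := -(X + 6) ^ 3) hag
  have hdeg2 := natDegree_linear' (b := C (C ((X : Polynomial ℤ) ^ 3 - 3 * X ^ 2 + 1))) haq
  obtain ⟨hc3, hc2, hc1, hc0⟩ := coeff_cubic' (R := Polynomial (Polynomial (Polynomial ℤ)))
    ((X : Polynomial (Polynomial (Polynomial ℤ))) ^ 2 + 3 * X + 9) 0 0 (-(X + 6) ^ 3)
  obtain ⟨hl1, hl0⟩ := coeff_linear' (R := Polynomial (Polynomial (Polynomial ℤ))) (C (C ((X : Polynomial ℤ) - X ^ 2)))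
    (C (C ((X : Polynomial ℤ) ^ 3 - 3 * X ^ 2 + 1)))
  have hr1 : _root_.resultant
      (gpoly (Polynomial.X : Polynomial (Polynomial (Polynomial (Polynomial ℤ))))
        (Polynomial.C Polynomial.X))
      (hpoly Polynomial.X (Polynomial.C (Polynomial.C (Polynomial.C Polynomial.X))))
      = C (C (((X : Polynomial ℤ) - X ^ 2) ^ 3)) * X ^ 3
        + C (C (((X : Polynomial ℤ) ^ 3 - 3 * X ^ 2 + 1) ^ 3 + 18 * (X - X ^ 2) ^ 3)) * X ^ 2
        + C (C (3 * ((X : Polynomial ℤ) ^ 3 - 3 * X ^ 2 + 1) ^ 3 + 108 * (X - X ^ 2) ^ 3)) * X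
        + C (C (9 * ((X : Polynomial ℤ) ^ 3 - 3 * X ^ 2 + 1) ^ 3 + 216 * (X - X ^ 2) ^ 3)) := by
    rw [hg, hq1, res31 _ _ hdeg1 hdeg2, hc3, hc2, hc1, hc0, hl1, hl0]
    simp only [map_add, map_mul, map_pow, map_sub, map_neg, map_ofNat, map_one]
    ring
  have hq2 : hpoly (Polynomial.X : Polynomial (Polynomial (Polynomial ℤ)))
        (Polynomial.C Polynomial.X)
      = C (X - X ^ 2) * X + C (X ^ 3 - 3 * X ^ 2 + 1) := by
    simp only [hpoly, map_add, map_mul, map_pow, map_sub, map_ofNat, map_one]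
    ring
  have hc3ne : (C (((X : Polynomial ℤ) - X ^ 2) ^ 3) : Polynomial (Polynomial ℤ)) ≠ 0 :=
    C_ne_zero.mpr (pow_ne_zero 3 XsubX2_ne)
  have haq2 : ((X : Polynomial (Polynomial ℤ)) - X ^ 2) ≠ 0 := XsubX2_ne
  have hdeg3 : (_root_.resultant
      (gpoly (Polynomial.X : Polynomial (Polynomial (Polynomial (Polynomial ℤ))))
        (Polynomial.C Polynomial.X))
      (hpoly Polynomial.X (Polynomial.C (Polynomial.C (Polynomial.C Polynomial.X))))).natDegree
      = 3 := by
    rw [hr1]; exact natDegree_cubic' hc3ne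
  have hdeg4 := natDegree_linear' (b := ((X : Polynomial (Polynomial ℤ)) ^ 3 - 3 * X ^ 2 + 1)) haq2
  obtain ⟨hd3, hd2, hd1, hd0⟩ := coeff_cubic' (R := Polynomial (Polynomial ℤ))
    (C (((X : Polynomial ℤ) - X ^ 2) ^ 3))
    (C (((X : Polynomial ℤ) ^ 3 - 3 * X ^ 2 + 1) ^ 3 + 18 * (X - X ^ 2) ^ 3))
    (C (3 * ((X : Polynomial ℤ) ^ 3 - 3 * X ^ 2 + 1) ^ 3 + 108 * (X - X ^ 2) ^ 3))
    (C (9 * ((X : Polynomial ℤ) ^ 3 - 3 * X ^ 2 + 1) ^ 3 + 216 * (X - X ^ 2) ^ 3))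
  obtain ⟨hm1, hm0⟩ := coeff_linear' (R := Polynomial (Polynomial ℤ))
    ((X : Polynomial (Polynomial ℤ)) - X ^ 2) ((X : Polynomial (Polynomial ℤ)) ^ 3 - 3 * X ^ 2 + 1)
  rw [hq2, res31 _ _ hdeg3 hdeg4, hr1, hd3, hd2, hd1, hd0, hm1, hm0]
  simp only [fpoly, k1poly, k2poly, map_add, map_mul, map_pow, map_sub, map_neg, map_ofNat,
    map_one]
  ring
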